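/- arXiv:1505.01790 — 3 statements merged into one kernel-verified Lean document; each statement's English description precedes it below -/
import Mathlib

section
/- Let J be the solution of the ODE J''(t) = (t/2)^{-2-ε} J(t) on [2,∞) with J(2) = 0 and J'(2) = 1, where 0 < ε < 1/100. Then J' is nondecreasing, 1 ≤ J'(t) for all t ≥ 2, the limit J'(∞) = lim_{t→∞} J'(t) exists and satisfies J'(∞) ≤ exp(∫₂^∞ (t-2)(t/2)^{-2-ε} dt) < ∞, and t - 2 ≤ J(t) ≤ J'(∞)(t-2) for all t ≥ 2. -/
open Filter

/-- Monotonicity on `Ici a` from a nonnegative derivative. -/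
lemma monoOn_Ici_aux {f f' : ℝ → ℝ} {a : ℝ}
    (hd : ∀ t ∈ Set.Ici a, HasDerivAt f (f' t) t)
    (h0 : ∀ t ∈ Set.Ioi a, 0 ≤ f' t) : MonotoneOn f (Set.Ici a) := by
  apply monotoneOn_of_deriv_nonneg (convex_Ici a)
  · exact fun t ht => (hd t ht).continuousAt.continuousWithinAt
  · intro t ht
    rw [interior_Ici] at ht
    exact ((hd t (Set.Ioi_subset_Ici_self ht)).differentiableAt).differentiableWithinAt
  · intro t ht
    rw [interior_Ici] at ht
    rw [(hd t (Set.Ioi_subset_Ici_self ht)).deriv]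
    exact h0 t ht

/-- Monotonicity on `Icc a b` from a nonnegative derivative. -/
lemma monoOn_Icc_aux {f f' : ℝ → ℝ} {a b : ℝ}
    (hd : ∀ t ∈ Set.Icc a b, HasDerivAt f (f' t) t)
    (h0 : ∀ t ∈ Set.Ioo a b, 0 ≤ f' t) : MonotoneOn f (Set.Icc a b) := by
  apply monotoneOn_of_deriv_nonneg (convex_Icc a b)
  · exact fun t ht => (hd t ht).continuousAt.continuousWithinAt
  · intro t ht
    rw [interior_Icc] at ht
    exact ((hd t (Set.Ioo_subset_Icc_self ht)).differentiableAt).differentiableWithinAt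
  · intro t ht
    rw [interior_Icc] at ht
    rw [(hd t (Set.Ioo_subset_Icc_self ht)).deriv]
    exact h0 t ht

/-- Properties of the solution of the Jacobi comparison ODE
`J''(t) = (t/2)^{-2-ε} J(t)` on `[2,∞)` with `J(2) = 0`, `J'(2) = 1`:
`J'` is nondecreasing, `1 ≤ J'`, the limit `J'(∞)` exists with
`J'(∞) ≤ exp(∫₂^∞ (t-2)(t/2)^{-2-ε} dt)`, and `t - 2 ≤ J(t) ≤ J'(∞)(t-2)`. -/
theorem jacobi_comparison_ODE_properties
    (ε : ℝ) (hε : 0 < ε) (hε' : ε < 1/100)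
    (J J' : ℝ → ℝ)
    (hJ : ∀ t ∈ Set.Ici (2:ℝ), HasDerivAt J (J' t) t)
    (hJ' : ∀ t ∈ Set.Ici (2:ℝ), HasDerivAt J' ((t/2) ^ (-2 - ε) * J t) t)
    (hJ2 : J 2 = 0) (hJ'2 : J' 2 = 1) :
    MonotoneOn J' (Set.Ici (2:ℝ)) ∧
    (∀ t ∈ Set.Ici (2:ℝ), 1 ≤ J' t) ∧
    ∃ l : ℝ, Tendsto J' atTop (nhds l) ∧
      l ≤ Real.exp (∫ t in Set.Ioi (2:ℝ), (t - 2) * (t/2) ^ (-2 - ε)) ∧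
      ∀ t ∈ Set.Ici (2:ℝ), t - 2 ≤ J t ∧ J t ≤ l * (t - 2) := by
  set q : ℝ → ℝ := fun t => (t/2) ^ (-2 - ε) with hq_def
  have q_nonneg : ∀ t : ℝ, 2 ≤ t → 0 ≤ q t := by
    intro t ht
    exact (Real.rpow_pos_of_pos (by linarith) _).le
  -- J is continuous at points of [2, ∞)
  have hJcontAt : ∀ t ∈ Set.Ici (2:ℝ), ContinuousAt J t :=
    fun t ht => (hJ t ht).continuousAt
  -- Near 2 from the right, J is positive
  have hnear : ∃ u : ℝ, 2 < u ∧ ∀ t ∈ Set.Ioc (2:ℝ) u, 0 < J t := by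
    have hd2 : HasDerivAt J 1 2 := hJ'2 ▸ hJ 2 Set.self_mem_Ici
    have hslope := hasDerivAt_iff_tendsto_slope.mp hd2
    have hpos : ∀ᶠ t in nhdsWithin (2:ℝ) {x | x ≠ 2}, (0:ℝ) < slope J 2 t :=
      hslope.eventually (eventually_gt_nhds one_pos)
    have hpos' : ∀ᶠ t in nhdsWithin (2:ℝ) (Set.Ioi 2), (0:ℝ) < slope J 2 t :=
      nhdsWithin_mono _ (fun x hx => ne_of_gt hx) hpos
    rw [eventually_iff, mem_nhdsGT_iff_exists_Ioc_subset] at hpos'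
    obtain ⟨u, hu, hsub⟩ := hpos'
    refine ⟨u, hu, fun t ht => ?_⟩
    have h1 : 0 < slope J 2 t := hsub ht
    have h2 : (0:ℝ) < t - 2 := by linarith [ht.1]
    rw [slope_def_field] at h1
    have h3 := mul_pos h1 h2
    rw [div_mul_cancel₀ _ (ne_of_gt h2)] at h3
    rw [hJ2] at h3
    linarith
  obtain ⟨u, hu2, hupos⟩ := hnear
  -- Positivity of J on [2, ∞)
  have hJnonneg : ∀ t ∈ Set.Ici (2:ℝ), 0 ≤ J t := by
    intro T hT
    by_contra hneg
    push_neg at hneg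
    have hT2 : 2 < T := by
      rcases lt_or_eq_of_le (Set.mem_Ici.mp hT) with h | h
      · exact h
      · exfalso; rw [← h, hJ2] at hneg; exact lt_irrefl 0 hneg
    rcases le_or_gt T u with hTu | huT
    · exact absurd (hupos T ⟨hT2, hTu⟩) (not_lt.mpr hneg.le)
    -- first crossing point
    set A : Set ℝ := Set.Icc u T ∩ J ⁻¹' Set.Iic 0 with hA_def
    have hAclosed : IsClosed A := by
      apply ContinuousOn.preimage_isClosed_of_isClosed _ isClosed_Icc isClosed_Iic
      exact fun t ht => (hJcontAt t (Set.mem_Ici.mpr (le_trans hu2.le ht.1))).continuousWithinAt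
    have hAne : A.Nonempty := ⟨T, ⟨huT.le, le_refl T⟩, hneg.le⟩
    have hAbdd : BddBelow A := ⟨u, fun x hx => hx.1.1⟩
    set c := sInf A with hc_def
    have hcA : c ∈ A := hAclosed.csInf_mem hAne hAbdd
    have hcu : u ≤ c := hcA.1.1
    have hc2 : 2 < c := lt_of_lt_of_le hu2 hcu
    have hlow : ∀ t, 2 < t → t < c → 0 < J t := by
      intro t h2t htc
      rcases le_or_gt t u with h | h
      · exact hupos t ⟨h2t, h⟩
      · by_contra hle
        push_neg at hle
        have : t ∈ A := ⟨⟨h.le, le_trans htc.le hcA.1.2⟩, hle⟩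
        exact absurd (csInf_le hAbdd this) (not_le.mpr htc)
    -- On [2,c], J ≥ 0 on the interior, so J' is monotone there
    have hsub2 : Set.Icc (2:ℝ) c ⊆ Set.Ici 2 := fun x hx => hx.1
    have hmono' : MonotoneOn J' (Set.Icc 2 c) := by
      apply monoOn_Icc_aux (fun t ht => hJ' t (hsub2 ht))
      intro t ht
      exact mul_nonneg (q_nonneg t ht.1.le) (hlow t ht.1 ht.2).le
    have hge1 : ∀ t ∈ Set.Icc (2:ℝ) c, 1 ≤ J' t := by
      intro t ht
      have := hmono' (Set.left_mem_Icc.mpr (by linarith)) ht ht.1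
      rwa [hJ'2] at this
    have hgrow : MonotoneOn (fun t => J t - (t - 2)) (Set.Icc 2 c) := by
      apply monoOn_Icc_aux (f' := fun t => J' t - 1)
      · intro t ht
        exact (hJ t (hsub2 ht)).sub (((hasDerivAt_id t).sub_const 2))
      · intro t ht
        linarith [hge1 t (Set.Ioo_subset_Icc_self ht)]
    have h0 : (0:ℝ) ≤ J c - (c - 2) := by
      have := hgrow (Set.left_mem_Icc.mpr (by linarith)) (Set.right_mem_Icc.mpr (by linarith))
        (by linarith)
      simpa [hJ2] using this
    have hc0 : J c ≤ 0 := hcA.2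
    linarith
  -- J' is monotone on [2, ∞)
  have hmono : MonotoneOn J' (Set.Ici 2) := by
    apply monoOn_Ici_aux hJ'
    intro t ht
    exact mul_nonneg (q_nonneg t (le_of_lt ht)) (hJnonneg t (Set.Ioi_subset_Ici_self ht))
  have hge1 : ∀ t ∈ Set.Ici (2:ℝ), 1 ≤ J' t := by
    intro t ht
    have := hmono (Set.self_mem_Ici) ht ht
    rwa [hJ'2] at this
  -- J t ≤ (t - 2) * J' t
  have hJle : ∀ T ∈ Set.Ici (2:ℝ), J T ≤ (T - 2) * J' T := by
    intro T hT
    have hm : MonotoneOn (fun s => J' T * (s - 2) - J s) (Set.Icc 2 T) := by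
      apply monoOn_Icc_aux (f' := fun s => J' T - J' s)
      · intro s hs
        exact ((((hasDerivAt_id s).sub_const 2).const_mul (J' T)).sub (hJ s hs.1)).congr_deriv (by simp)
      · intro s hs
        have := hmono (Set.mem_Ici.mpr hs.1.le) hT hs.2.le
        linarith
    have := hm (Set.left_mem_Icc.mpr hT) (Set.right_mem_Icc.mpr hT) hT
    simp only [hJ2, sub_self, mul_zero, sub_zero] at this
    linarith [this]
  -- the integrand
  set f : ℝ → ℝ := fun t => (t - 2) * q t with hf_def
  have hcont_q : ContinuousOn q (Set.Ioi 0) := by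
    apply ContinuousOn.rpow_const
    · exact (continuousOn_id.div_const 2)
    · intro x hx
      exact Or.inl (div_ne_zero (ne_of_gt hx) two_ne_zero)
  have hcont_f : ContinuousOn f (Set.Ioi 0) :=
    (continuousOn_id.sub continuousOn_const).mul hcont_q
  have hf_nonneg : ∀ t : ℝ, 2 ≤ t → 0 ≤ f t :=
    fun t ht => mul_nonneg (by linarith) (q_nonneg t ht)
  -- integrability of f on Ioi 2
  have hint : MeasureTheory.IntegrableOn f (Set.Ioi 2) := by
    have hg : MeasureTheory.IntegrableOn (fun t : ℝ => 2 ^ (2+ε) * t ^ (-1 - ε)) (Set.Ioi 2) :=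
      (integrableOn_Ioi_rpow_of_lt (by linarith) (by norm_num)).const_mul _
    apply MeasureTheory.Integrable.mono' hg
    · exact (hcont_f.mono (fun x (hx : x ∈ Set.Ioi 2) => by
        simp only [Set.mem_Ioi] at *; linarith)).aestronglyMeasurable measurableSet_Ioi
    · rw [MeasureTheory.ae_restrict_iff' measurableSet_Ioi]
      filter_upwards with t
      intro ht
      have ht2 : (2:ℝ) < t := ht
      have htpos : (0:ℝ) < t := by linarith
      rw [Real.norm_eq_abs, abs_of_nonneg (hf_nonneg t ht2.le)]
      have hq_eq : q t = 2 ^ (2+ε) * t ^ (-2 - ε) := by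
        show (t/2) ^ (-2 - ε) = 2 ^ (2+ε) * t ^ (-2 - ε)
        rw [Real.div_rpow htpos.le (by norm_num : (0:ℝ) ≤ 2)]
        rw [div_eq_mul_inv, ← Real.rpow_neg (by norm_num : (0:ℝ) ≤ 2),
          show -(-2 - ε) = 2 + ε by ring]
        ring
      have h1 : f t ≤ t * q t := by
        apply mul_le_mul_of_nonneg_right (by linarith) (q_nonneg t ht2.le)
      have h2 : t * q t = 2 ^ (2+ε) * t ^ (-1 - ε) := by
        rw [hq_eq]
        rw [show t * (2 ^ (2+ε) * t ^ (-2 - ε)) = 2 ^ (2+ε) * (t ^ (1:ℝ) * t ^ (-2 - ε)) by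
          rw [Real.rpow_one]; ring]
        rw [← Real.rpow_add htpos]
        ring_nf
      linarith [h1, h2 ▸ h1]
  set C := ∫ t in Set.Ioi (2:ℝ), f t with hC_def
  -- F is the primitive of f
  set F : ℝ → ℝ := fun t => ∫ s in (2:ℝ)..t, f s with hF_def
  have hF : ∀ t ∈ Set.Ici (2:ℝ), HasDerivAt F (f t) t := by
    intro t ht
    have ht0 : t ∈ Set.Ioi (0:ℝ) := by simp; linarith [Set.mem_Ici.mp ht]
    apply intervalIntegral.integral_hasDerivAt_right
    · apply ContinuousOn.intervalIntegrable
      apply hcont_f.mono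
      intro x hx
      rw [Set.uIcc_of_le (Set.mem_Ici.mp ht)] at hx
      simp only [Set.mem_Ioi]; linarith [hx.1]
    · exact hcont_f.stronglyMeasurableAtFilter isOpen_Ioi t ht0
    · exact hcont_f.continuousAt (isOpen_Ioi.mem_nhds ht0)
  -- log J' ≤ F
  have hJ'pos : ∀ t ∈ Set.Ici (2:ℝ), 0 < J' t := fun t ht => lt_of_lt_of_le one_pos (hge1 t ht)
  have hlog : ∀ t ∈ Set.Ici (2:ℝ), Real.log (J' t) ≤ F t := by
    intro t ht
    have hm : MonotoneOn (fun s => F s - Real.log (J' s)) (Set.Ici 2) := by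
      apply monoOn_Ici_aux (f' := fun s => f s - (q s * J s) / J' s)
      · intro s hs
        exact (hF s hs).sub ((hJ' s hs).log (ne_of_gt (hJ'pos s hs)))
      · intro s hs
        have hs2 : (2:ℝ) ≤ s := le_of_lt hs
        have h1 : q s * J s ≤ q s * ((s - 2) * J' s) :=
          mul_le_mul_of_nonneg_left (hJle s hs2) (q_nonneg s hs2)
        have h2 : (q s * J s) / J' s ≤ f s := by
          rw [div_le_iff₀ (hJ'pos s hs2)]
          calc q s * J s ≤ q s * ((s - 2) * J' s) := h1
            _ = f s * J' s := by rw [hf_def]; ring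
        linarith
    have := hm Set.self_mem_Ici ht (Set.mem_Ici.mp ht)
    have hF2 : F 2 = 0 := intervalIntegral.integral_same
    simp only [hF2, hJ'2, Real.log_one, sub_zero, zero_sub] at this
    linarith
  -- F t ≤ C
  have hFC : ∀ t ∈ Set.Ici (2:ℝ), F t ≤ C := by
    intro t ht
    have h2t : (2:ℝ) ≤ t := ht
    rw [hF_def]
    simp only
    rw [intervalIntegral.integral_of_le h2t]
    apply MeasureTheory.setIntegral_mono_set hint
    · exact Filter.Eventually.mono (MeasureTheory.ae_restrict_mem measurableSet_Ioi)
        (fun s hs => hf_nonneg s (le_of_lt hs))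
    · exact HasSubset.Subset.eventuallyLE Set.Ioc_subset_Ioi_self
  have hbound : ∀ t ∈ Set.Ici (2:ℝ), J' t ≤ Real.exp C := by
    intro t ht
    calc J' t = Real.exp (Real.log (J' t)) := (Real.exp_log (hJ'pos t ht)).symm
      _ ≤ Real.exp C := Real.exp_le_exp.mpr (le_trans (hlog t ht) (hFC t ht))
  -- the limit
  set g : ℝ → ℝ := fun t => J' (max t 2) with hg_def
  have hg_mono : Monotone g := by
    intro a b hab
    exact hmono (le_max_right a 2) (le_max_right b 2) (max_le_max hab (le_refl 2))
  have hg_bdd : BddAbove (Set.range g) := by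
    refine ⟨Real.exp C, ?_⟩
    rintro x ⟨t, rfl⟩
    exact hbound _ (le_max_right t 2)
  set l := ⨆ t, g t with hl_def
  have hgl : Tendsto g atTop (nhds l) := tendsto_atTop_ciSup hg_mono hg_bdd
  have hJ'l : Tendsto J' atTop (nhds l) := by
    apply hgl.congr'
    filter_upwards [eventually_ge_atTop (2:ℝ)] with t ht
    simp [hg_def, max_eq_left ht]
  have hJ'le_l : ∀ t ∈ Set.Ici (2:ℝ), J' t ≤ l := by
    intro t ht
    have h1 : g t ≤ l := le_ciSup hg_bdd t
    have h2 : g t = J' t := by simp [hg_def, max_eq_left (Set.mem_Ici.mp ht)]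
    rwa [h2] at h1
  have hlC : l ≤ Real.exp C := ciSup_le fun t => hbound _ (le_max_right t 2)
  refine ⟨hmono, hge1, l, hJ'l, hlC, ?_⟩
  intro t ht
  constructor
  · -- t - 2 ≤ J t
    have hm : MonotoneOn (fun s => J s - (s - 2)) (Set.Ici 2) := by
      apply monoOn_Ici_aux (f' := fun s => J' s - 1)
      · intro s hs
        exact (hJ s hs).sub ((hasDerivAt_id s).sub_const 2)
      · intro s hs
        linarith [hge1 s (Set.Ioi_subset_Ici_self hs)]
    have := hm Set.self_mem_Ici ht (Set.mem_Ici.mp ht)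
    simp only [hJ2, sub_self, sub_zero] at this
    linarith
  · -- J t ≤ l * (t - 2)
    have hm : MonotoneOn (fun s => l * (s - 2) - J s) (Set.Ici 2) := by
      apply monoOn_Ici_aux (f' := fun s => l - J' s)
      · intro s hs
        exact ((((hasDerivAt_id s).sub_const 2).const_mul l).sub (hJ s hs)).congr_deriv (by simp)
      · intro s hs
        linarith [hJ'le_l s (Set.Ioi_subset_Ici_self hs)]
    have := hm Set.self_mem_Ici ht (Set.mem_Ici.mp ht)
    simp only [hJ2, sub_self, mul_zero, sub_zero] at this
    linarith
end

section
/- There is no 2-dimensional Lie subalgebra of the Lie algebra of Euclidean motions of R^4 of the form {x ↦ ax + b : a ∈ su(2), b ∈ R^4} (su(2) acting on R^4 = C^2) whose generators have nonzero rotation part. Precisely: if e₁(x) = ax + b and e₂(x) = Ax + B with a, A ∈ su(2), (a,b) and (A,B) linearly independent, and [e₁, e₂] = c·e₁ for some scalar c, where [ax+b, Ax+B] = [a,A]x + (aB - Ab), then a = A = 0. -/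
/-- There is no 2-dimensional Lie subalgebra of affine vector fields
`x ↦ ax + b` on `ℝ⁴ = ℍ` with `a ∈ su(2)` (identified with the pure imaginary
quaternions) whose generators have nonzero rotation part.  Precisely: if
`e₁(x) = ax + b`, `e₂(x) = Ax + B` with `a, A` pure imaginary quaternions,
`(a,b)` and `(A,B)` linearly independent, and `[e₁,e₂] = c·e₁`, i.e.
`[a,A] = aA - Aa = c·a` and `aB - Ab = c·b`, then `a = 0` and `A = 0`. -/
theorem no_two_dim_subalgebra_with_rotation
    (a A b B : Quaternion ℝ) (ha : a.re = 0) (hA : A.re = 0) (c : ℝ)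
    (hindep : LinearIndependent ℝ ![((a, b) : Quaternion ℝ × Quaternion ℝ), (A, B)])
    (hbracket_rot : a * A - A * a = c • a)
    (hbracket_trans : a * B - A * b = c • b) :
    a = 0 ∧ A = 0 := by
  obtain ⟨hAB, hsm⟩ := linearIndependent_fin2.mp hindep
  simp only [Matrix.cons_val_one, Matrix.head_cons, Matrix.cons_val_zero] at hAB hsm
  have ha0 : a = 0 := by
    by_contra han
    have hna : Quaternion.normSq a ≠ 0 := Quaternion.normSq_ne_zero.mpr han
    have h1 := congrArg QuaternionAlgebra.imI hbracket_rot
    have h2 := congrArg QuaternionAlgebra.imJ hbracket_rot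
    have h3 := congrArg QuaternionAlgebra.imK hbracket_rot
    simp only [Quaternion.imI_sub, Quaternion.imJ_sub, Quaternion.imK_sub,
      Quaternion.imI_mul, Quaternion.imJ_mul, Quaternion.imK_mul,
      Quaternion.imI_smul, Quaternion.imJ_smul, Quaternion.imK_smul,
      ha, hA, smul_eq_mul] at h1 h2 h3
    have hnsq : Quaternion.normSq a = a.imI^2 + a.imJ^2 + a.imK^2 := by
      rw [Quaternion.normSq_def', ha]; ring
    have hc : c = 0 := by
      have : c * Quaternion.normSq a = 0 := by
        rw [hnsq]; linear_combination (-a.imI) * h1 - a.imJ * h2 - a.imK * h3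
      exact (mul_eq_zero.mp this).resolve_right hna
    rw [hc] at h1 h2 h3
    set t : ℝ := (a.imI * A.imI + a.imJ * A.imJ + a.imK * A.imK) / Quaternion.normSq a with ht
    have hAa : A = t • a := by
      ext
      · simp [ha, hA]
      · show A.imI = t • a.imI
        rw [ht, smul_eq_mul, div_mul_eq_mul_div, eq_div_iff hna, hnsq]
        linear_combination (a.imK / 2) * h2 - (a.imJ / 2) * h3
      · show A.imJ = t • a.imJ
        rw [ht, smul_eq_mul, div_mul_eq_mul_div, eq_div_iff hna, hnsq]
        linear_combination (a.imI / 2) * h3 - (a.imK / 2) * h1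
      · show A.imK = t • a.imK
        rw [ht, smul_eq_mul, div_mul_eq_mul_div, eq_div_iff hna, hnsq]
        linear_combination (a.imJ / 2) * h1 - (a.imI / 2) * h2
    have hBb : B = t • b := by
      have h0 : a * (B - t • b) = 0 := by
        rw [hAa, hc] at hbracket_trans
        rw [mul_sub, mul_smul_comm]
        rw [smul_mul_assoc] at hbracket_trans
        simpa using hbracket_trans
      exact sub_eq_zero.mp ((mul_eq_zero.mp h0).resolve_left han)
    rcases eq_or_ne t 0 with h | h
    · exact hAB (by rw [Prod.ext_iff]; simp [hAa, hBb, h])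
    · exact hsm t⁻¹ (by rw [Prod.ext_iff]; simp [hAa, hBb, Prod.smul_def, smul_smul,
        inv_mul_cancel₀ h])
  refine ⟨ha0, ?_⟩
  have hb : b ≠ 0 := by
    intro hb0
    exact hindep.ne_zero 0 (by simp [ha0, hb0])
  have hAb : A * b = (-c) • b := by
    rw [ha0, zero_mul, zero_sub] at hbracket_trans
    rw [neg_smul, ← hbracket_trans, neg_neg]
  have hAA : A * A = ((-(Quaternion.normSq A) : ℝ) : Quaternion ℝ) := by
    ext
    · simp only [Quaternion.re_mul, hA, Quaternion.re_coe, Quaternion.normSq_def']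
      ring
    · simp only [Quaternion.imI_mul, hA, Quaternion.imI_coe]
      ring
    · simp only [Quaternion.imJ_mul, hA, Quaternion.imJ_coe]
      ring
    · simp only [Quaternion.imK_mul, hA, Quaternion.imK_coe]
      ring
  have key : ((Quaternion.normSq A + c^2 : ℝ)) • b = 0 := by
    have : A * (A * b) = (c^2) • b := by
      rw [hAb, mul_smul_comm, hAb, smul_smul]; ring_nf
    rw [← mul_assoc, hAA, Quaternion.coe_mul_eq_smul] at this
    have := this
    rw [add_smul, ← this]
    simp [neg_smul]
  have hn0 : Quaternion.normSq A + c^2 = 0 := by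
    rcases smul_eq_zero.mp key with h | h
    · exact h
    · exact absurd h hb
  have : Quaternion.normSq A = 0 := by nlinarith [Quaternion.normSq_nonneg (a := A), sq_nonneg c]
  exact Quaternion.normSq_eq_zero.mp this
end

section
/- Let A = (a b; c d) be in GL(2,Z) and suppose there exists λ ∈ C with Im λ ≠ 0 (equivalently λ ∉ R) and τ ∈ C with {1, τ} linearly independent over R such that a + bτ = λ and c + dτ = λτ. Then det A = 1, tr A ∈ {-1, 0, 1}, and λ is a primitive root of unity of order 3, 4, or 6; i.e., λ ∈ {e^{±iπ/3}, e^{±iπ/2}, e^{±2iπ/3}}. -/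
lemma exp_coe_mul_I (θ : ℝ) :
    Complex.exp ((θ:ℂ) * Complex.I) = ⟨Real.cos θ, Real.sin θ⟩ := by
  apply Complex.ext
  · simp [Complex.exp_ofReal_mul_I_re]
  · simp [Complex.exp_ofReal_mul_I_im]

lemma cos_2pi3 : Real.cos (2*Real.pi/3) = -(1/2) := by
  have h : 2*Real.pi/3 = Real.pi - Real.pi/3 := by ring
  rw [h, Real.cos_pi_sub, Real.cos_pi_div_three]

lemma sin_2pi3 : Real.sin (2*Real.pi/3) = Real.sqrt 3 / 2 := by
  have h : 2*Real.pi/3 = Real.pi - Real.pi/3 := by ring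
  rw [h, Real.sin_pi_sub, Real.sin_pi_div_three]

/-- If `A = (a b; c d) ∈ GL(2,ℤ)` fixes the lattice `ℤ ⊕ ℤτ` (with `τ ∉ ℝ`)
via multiplication by a nonreal complex number `λ`, i.e. `a + bτ = λ` and
`c + dτ = λτ`, then `det A = 1`, `tr A ∈ {-1,0,1}`, and `λ` is a primitive
root of unity of order 3, 4 or 6: `λ ∈ {e^{±iπ/3}, e^{±iπ/2}, e^{±2iπ/3}}`. -/
theorem elliptic_monodromy_classification
    (a b c d : ℤ) (hdet : a * d - b * c = 1 ∨ a * d - b * c = -1)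
    (lam τ : ℂ) (hlam : lam.im ≠ 0) (hτ : τ.im ≠ 0)
    (h1 : (a : ℂ) + b * τ = lam)
    (h2 : (c : ℂ) + d * τ = lam * τ) :
    a * d - b * c = 1 ∧ (a + d = -1 ∨ a + d = 0 ∨ a + d = 1) ∧
    (lam = Complex.exp ((Real.pi : ℂ) / 3 * Complex.I) ∨
     lam = Complex.exp (-((Real.pi : ℂ) / 3) * Complex.I) ∨
     lam = Complex.exp ((Real.pi : ℂ) / 2 * Complex.I) ∨
     lam = Complex.exp (-((Real.pi : ℂ) / 2) * Complex.I) ∨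
     lam = Complex.exp (2 * (Real.pi : ℂ) / 3 * Complex.I) ∨
     lam = Complex.exp (-(2 * (Real.pi : ℂ) / 3) * Complex.I)) := by
  have key : lam^2 - ((a:ℂ)+d)*lam + ((a:ℂ)*d - (b:ℂ)*c) = 0 := by
    linear_combination ((d:ℂ) - lam) * h1 - (b:ℂ) * h2
  rw [Complex.ext_iff] at key
  simp [pow_two, Complex.mul_re, Complex.mul_im] at key
  set x := lam.re with hxdef
  set y := lam.im with hydef
  have him : 2*x*y - ((a:ℝ)+d)*y = 0 := by nlinarith [key.1, key.2]
  have hre : x*x - y*y - ((a:ℝ)+d)*x + ((a:ℝ)*d - (b:ℝ)*c) = 0 := by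
    nlinarith [key.1, key.2]
  have hx : 2*x = (a:ℝ)+d := by
    rcases mul_eq_zero.mp (show (2*x - ((a:ℝ)+d)) * y = 0 by linarith [him]; ) with h | h
    · linarith
    · exact absurd h hlam
  have hy2 : y*y > 0 := mul_self_pos.mpr hlam
  have hsub : ((a:ℝ)+d)*x = 2*(x*x) := by rw [← hx]; ring
  rcases hdet with hD | hD
  · -- det = 1
    have hDr : (a:ℝ)*d - (b:ℝ)*c = 1 := by exact_mod_cast hD
    have hyy : y*y = 1 - x*x := by linarith [hre, hsub]
    have hx2 : x*x < 1 := by nlinarith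
    have htr : ((a:ℝ)+d)^2 < 4 := by nlinarith
    have htz : (a+d)^2 < 4 := by exact_mod_cast (by push_cast; linarith [htr] : ((a+d:ℤ):ℝ)^2 < 4)
    have h2a : a+d < 2 := by nlinarith
    have h2b : -2 < a+d := by nlinarith
    refine ⟨hD, by omega, ?_⟩
    have hs3 : Real.sqrt 3 * Real.sqrt 3 = 3 := Real.mul_self_sqrt (by norm_num)
    -- three cases for trace
    interval_cases h : a + d
    · -- t = -1
      have hta : ((a:ℝ)+d) = -1 := by exact_mod_cast (by push_cast [h]; norm_num : ((a+d:ℤ):ℝ) = -1)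
      have hxv : x = -(1/2) := by linarith
      have hyv : y = Real.sqrt 3 / 2 ∨ y = -(Real.sqrt 3 / 2) := by
        have : y * y = (Real.sqrt 3 / 2) * (Real.sqrt 3 / 2) := by
          rw [hyy, hxv]; nlinarith [hs3]
        rcases mul_self_eq_mul_self_iff.mp this with h' | h'
        · exact Or.inl h'
        · exact Or.inr (by linarith)
      have e5 : 2 * (Real.pi : ℂ) / 3 * Complex.I = ((2*Real.pi/3 : ℝ):ℂ) * Complex.I := by
        push_cast; ring
      have e6 : -(2 * (Real.pi : ℂ) / 3) * Complex.I = ((-(2*Real.pi/3) : ℝ):ℂ) * Complex.I := by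
        push_cast; ring
      rcases hyv with hyv | hyv
      · refine Or.inr (Or.inr (Or.inr (Or.inr (Or.inl ?_))))
        rw [e5, exp_coe_mul_I, Complex.ext_iff]
        exact ⟨by rw [← hxdef, hxv, cos_2pi3], by rw [← hydef, hyv, sin_2pi3]⟩
      · refine Or.inr (Or.inr (Or.inr (Or.inr (Or.inr ?_))))
        rw [e6, exp_coe_mul_I, Complex.ext_iff]
        refine ⟨?_, ?_⟩
        · rw [← hxdef, hxv, Real.cos_neg, cos_2pi3]
        · rw [← hydef, hyv, Real.sin_neg, sin_2pi3]
    · -- t = 0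
      have hta : ((a:ℝ)+d) = 0 := by exact_mod_cast (by push_cast [h]; norm_num : ((a+d:ℤ):ℝ) = 0)
      have hxv : x = 0 := by linarith
      have hyv : y = 1 ∨ y = -1 := by
        have : y * y = 1 * 1 := by rw [hyy, hxv]; ring
        exact mul_self_eq_mul_self_iff.mp this
      have e3 : (Real.pi : ℂ) / 2 * Complex.I = ((Real.pi/2 : ℝ):ℂ) * Complex.I := by
        push_cast; ring
      have e4 : -((Real.pi : ℂ) / 2) * Complex.I = ((-(Real.pi/2) : ℝ):ℂ) * Complex.I := by
        push_cast; ring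
      rcases hyv with hyv | hyv
      · refine Or.inr (Or.inr (Or.inl ?_))
        rw [e3, exp_coe_mul_I, Complex.ext_iff]
        exact ⟨by rw [← hxdef, hxv, Real.cos_pi_div_two], by rw [← hydef, hyv, Real.sin_pi_div_two]⟩
      · refine Or.inr (Or.inr (Or.inr (Or.inl ?_)))
        rw [e4, exp_coe_mul_I, Complex.ext_iff]
        refine ⟨?_, ?_⟩
        · rw [← hxdef, hxv, Real.cos_neg, Real.cos_pi_div_two]
        · rw [← hydef, hyv, Real.sin_neg, Real.sin_pi_div_two]
    · -- t = 1
      have hta : ((a:ℝ)+d) = 1 := by exact_mod_cast (by push_cast [h]; norm_num : ((a+d:ℤ):ℝ) = 1)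
      have hxv : x = 1/2 := by linarith
      have hyv : y = Real.sqrt 3 / 2 ∨ y = -(Real.sqrt 3 / 2) := by
        have : y * y = (Real.sqrt 3 / 2) * (Real.sqrt 3 / 2) := by
          rw [hyy, hxv]; nlinarith [hs3]
        rcases mul_self_eq_mul_self_iff.mp this with h' | h'
        · exact Or.inl h'
        · exact Or.inr (by linarith)
      have e1 : (Real.pi : ℂ) / 3 * Complex.I = ((Real.pi/3 : ℝ):ℂ) * Complex.I := by
        push_cast; ring
      have e2 : -((Real.pi : ℂ) / 3) * Complex.I = ((-(Real.pi/3) : ℝ):ℂ) * Complex.I := by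
        push_cast; ring
      rcases hyv with hyv | hyv
      · refine Or.inl ?_
        rw [e1, exp_coe_mul_I, Complex.ext_iff]
        exact ⟨by rw [← hxdef, hxv, Real.cos_pi_div_three], by rw [← hydef, hyv, Real.sin_pi_div_three]⟩
      · refine Or.inr (Or.inl ?_)
        rw [e2, exp_coe_mul_I, Complex.ext_iff]
        refine ⟨?_, ?_⟩
        · rw [← hxdef, hxv, Real.cos_neg, Real.cos_pi_div_three]
        · rw [← hydef, hyv, Real.sin_neg, Real.sin_pi_div_three]
  · -- det = -1 : contradiction
    exfalso
    have hDr : (a:ℝ)*d - (b:ℝ)*c = -1 := by exact_mod_cast hD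
    linarith [hre, hsub, hy2, mul_self_nonneg x, hDr]
end
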